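/- arXiv:2511.06856 — 2 statements merged into one kernel-verified Lean document; each statement's English description precedes it below -/
import Mathlib

section
/- Let d ≥ 1, ε ∈ ℝ, U : ℝ^d → ℝ, and let ρ, S : ℝ × ℝ^d → ℝ with ρ(t,x) > 0 everywhere, both ρ and S continuously differentiable in t and twice continuously differentiable in x. Suppose that at every (t,x): (i) ∂_t ρ = −∇·(ρ ∇S) + ε Δρ (Fokker–Planck equation), and (ii) ∂_t S = −½‖∇S‖² − ε ΔS + U (Hamilton–Jacobi–Bellman equation). Then the Hopf–Cole transform Ŝ := S − ε·log ρ satisfies, at every (t,x), ∂_t Ŝ = −½‖∇Ŝ‖² − ½ε²‖∇(log ∘ ρ)‖² − ε² Δ(log ∘ ρ) + U. -/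
open MeasureTheory
open scoped RealInnerProductSpace BigOperators

/-- Gradient of a scalar function on Euclidean space. -/
noncomputable def egrad {d : ℕ} (f : EuclideanSpace ℝ (Fin d) → ℝ)
    (x : EuclideanSpace ℝ (Fin d)) : EuclideanSpace ℝ (Fin d) :=
  gradient f x

/-- Laplacian `Δf = ∑ i, ∂²f/∂x_i²`. -/
noncomputable def elap {d : ℕ} (f : EuclideanSpace ℝ (Fin d) → ℝ)
    (x : EuclideanSpace ℝ (Fin d)) : ℝ :=
  ∑ i, fderiv ℝ (fun y => fderiv ℝ f y (EuclideanSpace.single i (1 : ℝ))) x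
      (EuclideanSpace.single i (1 : ℝ))

/-- Divergence `∇·V = ∑ i, ∂V_i/∂x_i` of a vector field. -/
noncomputable def ediv {d : ℕ} (V : EuclideanSpace ℝ (Fin d) → EuclideanSpace ℝ (Fin d))
    (x : EuclideanSpace ℝ (Fin d)) : ℝ :=
  ∑ i, fderiv ℝ (fun y => V y i) x (EuclideanSpace.single i (1 : ℝ))

section Aux

open InnerProductSpace

variable {d : ℕ}

private lemma hc_grad_inner (f : EuclideanSpace ℝ (Fin d) → ℝ) (x v : EuclideanSpace ℝ (Fin d)) :
    ⟪gradient f x, v⟫ = fderiv ℝ f x v := by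
  rw [gradient, toDual_symm_apply]

private lemma hc_grad_apply (f : EuclideanSpace ℝ (Fin d) → ℝ) (x : EuclideanSpace ℝ (Fin d))
    (i : Fin d) :
    gradient f x i = fderiv ℝ f x (EuclideanSpace.single i (1:ℝ)) := by
  rw [← hc_grad_inner, EuclideanSpace.inner_single_right]; simp

private lemma hc_norm_sq_grad (f : EuclideanSpace ℝ (Fin d) → ℝ) (x : EuclideanSpace ℝ (Fin d)) :
    ‖gradient f x‖ ^ 2 = ∑ i, (fderiv ℝ f x (EuclideanSpace.single i (1:ℝ)))^2 := by
  rw [← real_inner_self_eq_norm_sq, PiLp.inner_apply]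
  simp [hc_grad_apply, sq]

private lemma hc_hasFDerivAt_log {f : EuclideanSpace ℝ (Fin d) → ℝ} {x : EuclideanSpace ℝ (Fin d)}
    (hf : DifferentiableAt ℝ f x) (hne : f x ≠ 0) :
    HasFDerivAt (fun z => Real.log (f z)) ((f x)⁻¹ • fderiv ℝ f x) x :=
  (Real.hasDerivAt_log hne).comp_hasFDerivAt x hf.hasFDerivAt

private lemma hc_diff_pd {f : EuclideanSpace ℝ (Fin d) → ℝ} (hf : ContDiff ℝ 2 f)
    (v : EuclideanSpace ℝ (Fin d)) :
    Differentiable ℝ (fun y => fderiv ℝ f y v) := by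
  have h1 : ContDiff ℝ 1 (fun y => fderiv ℝ f y) := hf.fderiv_right (by norm_num)
  exact (h1.clm_apply contDiff_const).differentiable one_ne_zero

/-- second partials of log f -/
private lemma hc_elap_log {f : EuclideanSpace ℝ (Fin d) → ℝ} (hf : ContDiff ℝ 2 f)
    (hpos : ∀ y, 0 < f y) (x : EuclideanSpace ℝ (Fin d)) :
    elap (fun z => Real.log (f z)) x
      = (f x)⁻¹ * elap f x
        - (f x ^ 2)⁻¹ * ∑ i, (fderiv ℝ f x (EuclideanSpace.single i (1:ℝ)))^2 := by
  have hfd : Differentiable ℝ f := hf.differentiable (by norm_num)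
  have key : ∀ i : Fin d,
      fderiv ℝ (fun y => fderiv ℝ (fun z => Real.log (f z)) y (EuclideanSpace.single i (1:ℝ)))
          x (EuclideanSpace.single i (1:ℝ))
        = (f x)⁻¹ * fderiv ℝ (fun y => fderiv ℝ f y (EuclideanSpace.single i (1:ℝ))) x
              (EuclideanSpace.single i (1:ℝ))
          - (f x ^ 2)⁻¹ * (fderiv ℝ f x (EuclideanSpace.single i (1:ℝ)))^2 := by
    intro i
    set v := EuclideanSpace.single i (1:ℝ)
    have hfun : (fun y => fderiv ℝ (fun z => Real.log (f z)) y v)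
        = fun y => (f y)⁻¹ * fderiv ℝ f y v := by
      funext y
      rw [(hc_hasFDerivAt_log (hfd y) (hpos y).ne').fderiv]
      simp
    rw [hfun]
    have hinv : HasFDerivAt (fun y => (f y)⁻¹) (-(f x ^ 2)⁻¹ • fderiv ℝ f x) x :=
      (hasDerivAt_inv (hpos x).ne').comp_hasFDerivAt x (hfd x).hasFDerivAt
    have hF : HasFDerivAt (fun y => fderiv ℝ f y v)
        (fderiv ℝ (fun y => fderiv ℝ f y v) x) x := (hc_diff_pd hf v x).hasFDerivAt
    have := (hinv.mul hF).fderiv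
    simp only [Pi.mul_def] at this
    rw [this]
    simp only [ContinuousLinearMap.add_apply, ContinuousLinearMap.smul_apply, smul_eq_mul,
      ContinuousLinearMap.neg_apply]
    ring
  rw [elap]
  simp_rw [key]
  rw [Finset.sum_sub_distrib, ← Finset.mul_sum, ← Finset.mul_sum, elap]

/-- divergence of f • grad g -/
private lemma hc_ediv {f g : EuclideanSpace ℝ (Fin d) → ℝ} (hf : ContDiff ℝ 2 f)
    (hg : ContDiff ℝ 2 g) (x : EuclideanSpace ℝ (Fin d)) :
    ediv (fun y => f y • gradient g y) x
      = f x * elap g x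
        + ∑ i, (fderiv ℝ f x (EuclideanSpace.single i (1:ℝ)))
            * (fderiv ℝ g x (EuclideanSpace.single i (1:ℝ))) := by
  have hfd : Differentiable ℝ f := hf.differentiable (by norm_num)
  have key : ∀ i : Fin d,
      fderiv ℝ (fun y => (f y • gradient g y) i) x (EuclideanSpace.single i (1:ℝ))
        = f x * fderiv ℝ (fun y => fderiv ℝ g y (EuclideanSpace.single i (1:ℝ))) x
              (EuclideanSpace.single i (1:ℝ))
          + fderiv ℝ f x (EuclideanSpace.single i (1:ℝ))
            * fderiv ℝ g x (EuclideanSpace.single i (1:ℝ)) := by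
    intro i
    set v := EuclideanSpace.single i (1:ℝ)
    have hfun : (fun y => (f y • gradient g y) i) = fun y => f y * fderiv ℝ g y v := by
      funext y
      simp only [PiLp.smul_apply, smul_eq_mul]
      rw [hc_grad_apply]
    rw [hfun]
    have hF : HasFDerivAt (fun y => fderiv ℝ g y v)
        (fderiv ℝ (fun y => fderiv ℝ g y v) x) x := (hc_diff_pd hg v x).hasFDerivAt
    have := ((hfd x).hasFDerivAt.mul hF).fderiv
    simp only [Pi.mul_def] at this
    rw [this]
    simp only [ContinuousLinearMap.add_apply, ContinuousLinearMap.smul_apply, smul_eq_mul]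
    ring
  rw [ediv]
  simp_rw [key]
  rw [Finset.sum_add_distrib, ← Finset.mul_sum, elap]

private lemma hc_sum_sq_sub (s : Finset (Fin d)) (a b : Fin d → ℝ) (c : ℝ) :
    ∑ i ∈ s, (a i - c * b i)^2
      = ∑ i ∈ s, (a i)^2 - 2*c*∑ i ∈ s, (a i * b i) + c^2 * ∑ i ∈ s, (b i)^2 := by
  have h : ∀ i ∈ s, (a i - c * b i)^2
      = (a i)^2 - 2*c*(a i * b i) + c^2*(b i)^2 := by intro i _; ring
  rw [Finset.sum_congr rfl h, Finset.sum_add_distrib, Finset.sum_sub_distrib,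
    ← Finset.mul_sum, ← Finset.mul_sum]

end Aux

/-- Hopf–Cole transform of the Hamilton–Jacobi–Bellman equation.
If `ρ` solves Fokker–Planck and `S` solves `∂ₜS = -½‖∇S‖² - εΔS + U`, then
`Ŝ = S - ε log ρ` solves `∂ₜŜ = -½‖∇Ŝ‖² - ½ε²‖∇log ρ‖² - ε²Δ(log ρ) + U`. -/
theorem hopf_cole_hjb {d : ℕ} (hd : 1 ≤ d) (ε : ℝ)
    (U : EuclideanSpace ℝ (Fin d) → ℝ)
    (ρ S : ℝ → EuclideanSpace ℝ (Fin d) → ℝ)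
    (hpos : ∀ t x, 0 < ρ t x)
    (hρt : ∀ x, ContDiff ℝ 1 (fun t => ρ t x))
    (hρx : ∀ t, ContDiff ℝ 2 (ρ t))
    (hSt : ∀ x, ContDiff ℝ 1 (fun t => S t x))
    (hSx : ∀ t, ContDiff ℝ 2 (S t))
    (hFP : ∀ t x, deriv (fun s => ρ s x) t
      = -ediv (fun y => ρ t y • egrad (S t) y) x + ε * elap (ρ t) x)
    (hHJB : ∀ t x, deriv (fun s => S s x) t
      = -(1/2) * ‖egrad (S t) x‖ ^ 2 - ε * elap (S t) x + U x) :
    ∀ t x, deriv (fun s => S s x - ε * Real.log (ρ s x)) t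
      = -(1/2) * ‖egrad (fun z => S t z - ε * Real.log (ρ t z)) x‖ ^ 2
        - (1/2) * ε ^ 2 * ‖egrad (fun z => Real.log (ρ t z)) x‖ ^ 2
        - ε ^ 2 * elap (fun z => Real.log (ρ t z)) x + U x := by
  intro t x
  have hρd : Differentiable ℝ (ρ t) := (hρx t).differentiable (by norm_num)
  have hSd : Differentiable ℝ (S t) := (hSx t).differentiable (by norm_num)
  have hne : ρ t x ≠ 0 := (hpos t x).ne'
  -- time derivative
  have hSder : HasDerivAt (fun s => S s x) (deriv (fun s => S s x) t) t :=
    (((hSt x).differentiable one_ne_zero) t).hasDerivAt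
  have hρder : HasDerivAt (fun s => ρ s x) (deriv (fun s => ρ s x) t) t :=
    (((hρt x).differentiable one_ne_zero) t).hasDerivAt
  have hlogder : HasDerivAt (fun s => Real.log (ρ s x))
      ((ρ t x)⁻¹ * deriv (fun s => ρ s x) t) t :=
    by have h := (Real.hasDerivAt_log hne).comp t hρder; exact h
  have hL : deriv (fun s => S s x - ε * Real.log (ρ s x)) t
      = deriv (fun s => S s x) t - ε * ((ρ t x)⁻¹ * deriv (fun s => ρ s x) t) :=
    (hSder.sub (hlogder.const_mul ε)).deriv
  -- spatial identities
  -- fderiv of log ρ t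
  have hlogf : fderiv ℝ (fun z => Real.log (ρ t z)) x = (ρ t x)⁻¹ • fderiv ℝ (ρ t) x :=
    (hc_hasFDerivAt_log (hρd x) hne).fderiv
  -- fderiv of Ŝ
  have hShat : fderiv ℝ (fun z => S t z - ε * Real.log (ρ t z)) x
      = fderiv ℝ (S t) x - ε • ((ρ t x)⁻¹ • fderiv ℝ (ρ t) x) :=
    ((hSd x).hasFDerivAt.sub ((hc_hasFDerivAt_log (hρd x) hne).const_mul ε)).fderiv
  -- abbreviations
  set a : Fin d → ℝ := fun i => fderiv ℝ (S t) x (EuclideanSpace.single i (1:ℝ)) with ha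
  set b : Fin d → ℝ := fun i => fderiv ℝ (ρ t) x (EuclideanSpace.single i (1:ℝ)) with hb
  set r : ℝ := ρ t x with hr
  -- norms
  have hnS : ‖egrad (S t) x‖ ^ 2 = ∑ i, (a i)^2 := hc_norm_sq_grad _ x
  have hnhat : ‖egrad (fun z => S t z - ε * Real.log (ρ t z)) x‖ ^ 2
      = ∑ i, (a i - ε * (r⁻¹ * b i))^2 := by
    rw [egrad, hc_norm_sq_grad]
    apply Finset.sum_congr rfl
    intro i _
    rw [hShat]
    simp only [ContinuousLinearMap.sub_apply, ContinuousLinearMap.smul_apply, smul_eq_mul]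
    rfl
  have hnlog : ‖egrad (fun z => Real.log (ρ t z)) x‖ ^ 2 = ∑ i, (r⁻¹ * b i)^2 := by
    rw [egrad, hc_norm_sq_grad]
    apply Finset.sum_congr rfl
    intro i _
    rw [hlogf]
    simp only [ContinuousLinearMap.smul_apply, smul_eq_mul]
    rfl
  have hlap : elap (fun z => Real.log (ρ t z)) x
      = r⁻¹ * elap (ρ t) x - (r ^ 2)⁻¹ * ∑ i, (b i)^2 :=
    hc_elap_log (hρx t) (hpos t) x
  have hdiv : ediv (fun y => ρ t y • egrad (S t) y) x
      = r * elap (S t) x + ∑ i, b i * a i := by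
    simpa [egrad] using hc_ediv (hρx t) (hSx t) x
  -- assemble
  rw [hL, hHJB t x, hFP t x, hdiv, hnS, hnhat, hnlog, hlap,
    hc_sum_sq_sub Finset.univ a (fun i => r⁻¹ * b i) ε]
  have hsum1 : ∑ i, (a i * (r⁻¹ * b i)) = r⁻¹ * ∑ i, b i * a i := by
    rw [Finset.mul_sum]; apply Finset.sum_congr rfl; intro i _; ring
  have hsum2 : ∑ i, (r⁻¹ * b i)^2 = (r^2)⁻¹ * ∑ i, (b i)^2 := by
    rw [Finset.mul_sum]; apply Finset.sum_congr rfl; intro i _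
    rw [mul_pow]; ring
  rw [hsum1, hsum2]
  have hrne : r ≠ 0 := hne
  field_simp
  ring
end

section
/- Let d ≥ 1, ε ∈ ℝ, γ ∈ ℝ, U : ℝ^d → ℝ, and let ρ, S : ℝ × ℝ^d → ℝ with ρ(t,x) > 0 everywhere, both ρ and S continuously differentiable in t and twice continuously differentiable in x. Suppose that at every (t,x): (i) ∂_t ρ = −∇·(ρ ∇S) + ε Δρ, and (ii) ∂_t S = −½‖∇S‖² − ε ΔS + U − γ S (damped Hamilton–Jacobi–Bellman equation). Then the Hopf–Cole transform Ŝ := S − ε·log ρ satisfies, at every (t,x), ∂_t Ŝ = −½‖∇Ŝ‖² − ½ε²‖∇(log ∘ ρ)‖² − ε² Δ(log ∘ ρ) + U − γ Ŝ − ε γ log ρ. -/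
open MeasureTheory
open scoped RealInnerProductSpace BigOperators

lemma enorm_sq {d : ℕ} (v : EuclideanSpace ℝ (Fin d)) : ‖v‖^2 = ∑ i, (v i)^2 := by
  rw [EuclideanSpace.norm_eq, Real.sq_sqrt (by positivity)]
  simp [Real.norm_eq_abs, sq_abs]

lemma egrad_coord {d : ℕ} (f : EuclideanSpace ℝ (Fin d) → ℝ) (x : EuclideanSpace ℝ (Fin d))
    (i : Fin d) : egrad f x i = fderiv ℝ f x (EuclideanSpace.single i 1) := by
  have h1 : (inner ℝ (EuclideanSpace.single i (1:ℝ)) (egrad f x) : ℝ) = egrad f x i := by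
    rw [EuclideanSpace.inner_single_left]; simp
  rw [← h1, real_inner_comm]
  exact InnerProductSpace.toDual_symm_apply

lemma diff_dirderiv {d : ℕ} (P : EuclideanSpace ℝ (Fin d) → ℝ) (hP : ContDiff ℝ 2 P)
    (w : EuclideanSpace ℝ (Fin d)) :
    Differentiable ℝ (fun y => fderiv ℝ P y w) := by
  have h2 : ContDiff ℝ 1 (fderiv ℝ P) := hP.fderiv_right (m := 1) le_rfl
  exact ((ContinuousLinearMap.apply ℝ ℝ w).contDiff.comp h2).differentiable one_ne_zero

lemma fderiv_log_comp {d : ℕ} (P : EuclideanSpace ℝ (Fin d) → ℝ) (hne : ∀ z, P z ≠ 0)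
    (hPd : Differentiable ℝ P) :
    ∀ y w, fderiv ℝ (fun z => Real.log (P z)) y w = (P y)⁻¹ * fderiv ℝ P y w := by
  intro y w
  rw [fderiv.log (hPd y) (hne y)]
  simp [smul_eq_mul]

lemma second_log {d : ℕ} (P : EuclideanSpace ℝ (Fin d) → ℝ) (hP : ContDiff ℝ 2 P)
    (hne : ∀ z, P z ≠ 0) (x w : EuclideanSpace ℝ (Fin d)) :
    fderiv ℝ (fun y => fderiv ℝ (fun z => Real.log (P z)) y w) x w
      = -((P x)^2)⁻¹ * fderiv ℝ P x w * fderiv ℝ P x w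
        + (P x)⁻¹ * fderiv ℝ (fun y => fderiv ℝ P y w) x w := by
  have hPd : Differentiable ℝ P := hP.differentiable two_ne_zero
  have hfun : (fun y => fderiv ℝ (fun z => Real.log (P z)) y w)
      = fun y => (P y)⁻¹ * fderiv ℝ P y w :=
    funext fun y => fderiv_log_comp P hne hPd y w
  rw [hfun]
  have hinv : HasFDerivAt (fun y => (P y)⁻¹) ((-((P x)^2)⁻¹) • fderiv ℝ P x) x :=
    (hasDerivAt_inv (hne x)).comp_hasFDerivAt x (hPd x).hasFDerivAt
  have hg : HasFDerivAt (fun y => fderiv ℝ P y w)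
      (fderiv ℝ (fun y => fderiv ℝ P y w) x) x :=
    ((diff_dirderiv P hP w) x).hasFDerivAt
  change fderiv ℝ ((fun y => (P y)⁻¹) * fun y => fderiv ℝ P y w) x w = _
  rw [(hinv.mul hg).fderiv]
  simp [smul_eq_mul]
  ring

lemma prod_rule {d : ℕ} (P Q : EuclideanSpace ℝ (Fin d) → ℝ) (hPd : Differentiable ℝ P)
    (hQd : Differentiable ℝ Q) (x w : EuclideanSpace ℝ (Fin d)) :
    fderiv ℝ (fun y => P y * Q y) x w
      = P x * fderiv ℝ Q x w + Q x * fderiv ℝ P x w := by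
  change fderiv ℝ (P * Q) x w = _
  rw [((hPd x).hasFDerivAt.mul (hQd x).hasFDerivAt).fderiv]
  simp [smul_eq_mul]

/-- Hopf–Cole transform of the damped (contact) Hamilton–Jacobi–Bellman
equation.  If `ρ` solves Fokker–Planck and `S` solves
`∂ₜS = -½‖∇S‖² - εΔS + U - γS`, then `Ŝ = S - ε log ρ` solves
`∂ₜŜ = -½‖∇Ŝ‖² - ½ε²‖∇log ρ‖² - ε²Δ(log ρ) + U - γŜ - εγ log ρ`. -/
theorem hopf_cole_damped_hjb {d : ℕ} (hd : 1 ≤ d) (ε γ : ℝ)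
    (U : EuclideanSpace ℝ (Fin d) → ℝ)
    (ρ S : ℝ → EuclideanSpace ℝ (Fin d) → ℝ)
    (hpos : ∀ t x, 0 < ρ t x)
    (hρt : ∀ x, ContDiff ℝ 1 (fun t => ρ t x))
    (hρx : ∀ t, ContDiff ℝ 2 (ρ t))
    (hSt : ∀ x, ContDiff ℝ 1 (fun t => S t x))
    (hSx : ∀ t, ContDiff ℝ 2 (S t))
    (hFP : ∀ t x, deriv (fun s => ρ s x) t
      = -ediv (fun y => ρ t y • egrad (S t) y) x + ε * elap (ρ t) x)
    (hHJB : ∀ t x, deriv (fun s => S s x) t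
      = -(1/2) * ‖egrad (S t) x‖ ^ 2 - ε * elap (S t) x + U x - γ * S t x) :
    ∀ t x, deriv (fun s => S s x - ε * Real.log (ρ s x)) t
      = -(1/2) * ‖egrad (fun z => S t z - ε * Real.log (ρ t z)) x‖ ^ 2
        - (1/2) * ε ^ 2 * ‖egrad (fun z => Real.log (ρ t z)) x‖ ^ 2
        - ε ^ 2 * elap (fun z => Real.log (ρ t z)) x + U x
        - γ * (S t x - ε * Real.log (ρ t x))
        - ε * γ * Real.log (ρ t x) := by
  intro t x
  have hPd : Differentiable ℝ (ρ t) := (hρx t).differentiable two_ne_zero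
  have hSd : Differentiable ℝ (S t) := (hSx t).differentiable two_ne_zero
  have hne : ∀ z, ρ t z ≠ 0 := fun z => (hpos t z).ne'
  set r : ℝ := ρ t x with hr
  set a : Fin d → ℝ := fun i => fderiv ℝ (S t) x (EuclideanSpace.single i (1:ℝ)) with haa
  set b : Fin d → ℝ := fun i => fderiv ℝ (ρ t) x (EuclideanSpace.single i (1:ℝ)) with hbb
  set c : Fin d → ℝ := fun i =>
    fderiv ℝ (fun y => fderiv ℝ (S t) y (EuclideanSpace.single i (1:ℝ))) x
      (EuclideanSpace.single i (1:ℝ)) with hcc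
  set m : Fin d → ℝ := fun i =>
    fderiv ℝ (fun y => fderiv ℝ (ρ t) y (EuclideanSpace.single i (1:ℝ))) x
      (EuclideanSpace.single i (1:ℝ)) with hmm
  -- time derivative split
  have hρ' : HasDerivAt (fun s => ρ s x) (deriv (fun s => ρ s x) t) t :=
    (((hρt x).differentiable one_ne_zero) t).hasDerivAt
  have hS' : HasDerivAt (fun s => S s x) (deriv (fun s => S s x) t) t :=
    (((hSt x).differentiable one_ne_zero) t).hasDerivAt
  have Htime : deriv (fun s => S s x - ε * Real.log (ρ s x)) t
      = deriv (fun s => S s x) t - ε * (deriv (fun s => ρ s x) t / r) :=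
    (hS'.sub (((hρ'.log (hne x))).const_mul ε)).deriv
  -- Hopf–Cole gradient
  have hHC : fderiv ℝ (fun z => S t z - ε * Real.log (ρ t z)) x
      = fderiv ℝ (S t) x - ε • (r⁻¹ • fderiv ℝ (ρ t) x) := by
    have h1 : HasFDerivAt (fun z => Real.log (ρ t z)) (r⁻¹ • fderiv ℝ (ρ t) x) x :=
      (hPd x).hasFDerivAt.log (hne x)
    exact ((hSd x).hasFDerivAt.sub (h1.const_mul ε)).fderiv
  have G6 : ‖egrad (fun z => S t z - ε * Real.log (ρ t z)) x‖^2
      = ∑ i, (a i - ε * (r⁻¹ * b i))^2 := by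
    rw [enorm_sq]
    refine Finset.sum_congr rfl fun i _ => ?_
    rw [egrad_coord, hHC]
    simp [smul_eq_mul]
    rfl
  have G7 : ‖egrad (fun z => Real.log (ρ t z)) x‖^2 = ∑ i, (r⁻¹ * b i)^2 := by
    rw [enorm_sq]
    refine Finset.sum_congr rfl fun i _ => ?_
    rw [egrad_coord, fderiv_log_comp (ρ t) hne hPd]
  have G5 : ‖egrad (S t) x‖^2 = ∑ i, (a i)^2 := by
    rw [enorm_sq]
    exact Finset.sum_congr rfl fun i _ => by rw [egrad_coord]
  have G3 : elap (fun z => Real.log (ρ t z)) x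
      = ∑ i, (-(r^2)⁻¹ * b i * b i + r⁻¹ * m i) := by
    unfold elap
    exact Finset.sum_congr rfl fun i _ => second_log (ρ t) (hρx t) hne x _
  have G4 : ediv (fun y => ρ t y • egrad (S t) y) x = ∑ i, (r * c i + a i * b i) := by
    unfold ediv
    refine Finset.sum_congr rfl fun i _ => ?_
    have hfun : (fun y => (ρ t y • egrad (S t) y) i)
        = fun y => ρ t y * fderiv ℝ (S t) y (EuclideanSpace.single i (1:ℝ)) := by
      funext y
      simp [PiLp.smul_apply, smul_eq_mul, egrad_coord]
    rw [hfun, prod_rule (ρ t) _ hPd (diff_dirderiv (S t) (hSx t) _) x _]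
  have G1 : elap (S t) x = ∑ i, c i := rfl
  have G2 : elap (ρ t) x = ∑ i, m i := rfl
  rw [Htime, hHJB t x, hFP t x, G4, G2, G6, G7, G3, G5, G1]
  -- expand sums
  have E6 : ∑ i, (a i - ε * (r⁻¹ * b i))^2
      = (∑ i, (a i)^2) - 2*(ε*r⁻¹)*(∑ i, a i * b i) + (ε*r⁻¹)^2*(∑ i, (b i)^2) := by
    calc ∑ i, (a i - ε * (r⁻¹ * b i))^2
        = ∑ i, ((a i)^2 - 2*(ε*r⁻¹)*(a i * b i) + (ε*r⁻¹)^2*((b i)^2)) :=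
          Finset.sum_congr rfl fun i _ => by ring
      _ = _ := by
          rw [Finset.sum_add_distrib, Finset.sum_sub_distrib, ← Finset.mul_sum, ← Finset.mul_sum]
  have E7 : ∑ i, (r⁻¹ * b i)^2 = (r⁻¹)^2 * ∑ i, (b i)^2 := by
    rw [Finset.mul_sum]
    exact Finset.sum_congr rfl fun i _ => by ring
  have E3 : ∑ i, (-(r^2)⁻¹ * b i * b i + r⁻¹ * m i)
      = -(r^2)⁻¹ * (∑ i, (b i)^2) + r⁻¹ * (∑ i, m i) := by
    calc ∑ i, (-(r^2)⁻¹ * b i * b i + r⁻¹ * m i)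
        = ∑ i, (-(r^2)⁻¹ * ((b i)^2) + r⁻¹ * m i) :=
          Finset.sum_congr rfl fun i _ => by ring
      _ = _ := by rw [Finset.sum_add_distrib, ← Finset.mul_sum, ← Finset.mul_sum]
  have E4 : ∑ i, (r * c i + a i * b i) = r * (∑ i, c i) + ∑ i, a i * b i := by
    rw [Finset.mul_sum, ← Finset.sum_add_distrib]
  rw [E6, E7, E3, E4]
  have hrne : r ≠ 0 := hne x
  field_simp
  ring
end
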